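/- Let q₀(z,t) = z̄²(t²+|z|⁴)^{2/3} / (|z|^{8/3}(t+i|z|²)²) on ℍ minus the t-axis, and for y ∈ (0,π), |β| = 1 let δ_{y,β}(s) = ( √(e^s sin y) β e^{−(is/2) cot y}, e^s cos y ), s ∈ (0, 2 ln r). Then q₀(δ_{y,β}(s)) · (δ'_{y,β,1}(s))² = −1 / (4 sin^{4/3} y) for all s, so δ_{y,β} is a vertical trajectory of q₀, and its q₀-length equals ln(r) / sin^{2/3}(y). -/

import Mathlib

open Set Complex MeasureTheory

/-- The quadratic differential `q₀(z,t) = z̄²(t²+|z|⁴)^{2/3}/(|z|^{8/3}(t+i|z|²)²)`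
on `ℍ` minus the `t`-axis. -/
noncomputable def q0 (p : ℂ × ℝ) : ℂ :=
  (starRingEnd ℂ) p.1 ^ 2 * (((p.2 ^ 2 + ‖p.1‖ ^ 4) ^ (2/3 : ℝ) : ℝ) : ℂ) /
    (((‖p.1‖ ^ (8/3 : ℝ) : ℝ) : ℂ) *
      ((p.2 : ℂ) + Complex.I * ((‖p.1‖ ^ 2 : ℝ) : ℂ)) ^ 2)

/-- The ℂ-component of the radial curve
`δ_{y,β}(s) = (√(eˢ sin y)·β e^{−(is/2)cot y}, eˢ cos y)`. -/
noncomputable def radCurve1 (y : ℝ) (β : ℂ) (s : ℝ) : ℂ :=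
  (Real.sqrt (Real.exp s * Real.sin y) : ℂ) * β *
    Complex.exp (-(Complex.I * s / 2) * ((Real.cos y / Real.sin y : ℝ) : ℂ))

/-- The ℝ-component of the radial curve `δ_{y,β}`. -/
noncomputable def radCurve2 (y : ℝ) (s : ℝ) : ℝ :=
  Real.exp s * Real.cos y

lemma radCurve1_eq (y : ℝ) (hσ : Real.sin y ≠ 0) (β : ℂ) :
    radCurve1 y β = fun s : ℝ =>
      (Real.sqrt (Real.sin y) : ℂ) * β *
        Complex.exp ((s : ℂ) * (((Real.sin y : ℝ) : ℂ) - Complex.I * ((Real.cos y : ℝ) : ℂ)) / (2 * ((Real.sin y : ℝ) : ℂ))) := by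
  funext s
  unfold radCurve1
  rw [Real.sqrt_mul (Real.exp_nonneg s)]
  have h1 : Real.sqrt (Real.exp s) = Real.exp (s/2) := by
    rw [show Real.exp s = Real.exp (s/2) ^ 2 by rw [sq, ← Real.exp_add]; ring_nf]
    exact Real.sqrt_sq (Real.exp_nonneg _)
  rw [h1]
  have hσC : Complex.sin (y:ℂ) ≠ 0 := by
    rw [← Complex.ofReal_sin]; exact_mod_cast hσ
  have h2 : Complex.exp (((s/2 : ℝ) : ℂ)) *
      Complex.exp (-(Complex.I * s / 2) * ((Real.cos y / Real.sin y : ℝ) : ℂ)) =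
      Complex.exp ((s : ℂ) * (((Real.sin y : ℝ) : ℂ) - Complex.I * ((Real.cos y : ℝ) : ℂ)) / (2 * ((Real.sin y : ℝ) : ℂ))) := by
    rw [← Complex.exp_add]
    congr 1
    push_cast
    field_simp [hσC]
    ring
  rw [Complex.ofReal_mul, Complex.ofReal_exp, ← h2]
  ring

lemma radCurve1_hasDeriv (y : ℝ) (hσ : Real.sin y ≠ 0) (β : ℂ) (s : ℝ) :
    HasDerivAt (radCurve1 y β)
      (radCurve1 y β s *
        ((((Real.sin y : ℝ) : ℂ) - Complex.I * ((Real.cos y : ℝ) : ℂ)) / (2 * ((Real.sin y : ℝ) : ℂ)))) s := by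
  set C : ℂ := (Real.sqrt (Real.sin y) : ℂ) * β with hC
  set μ : ℂ := ((((Real.sin y : ℝ) : ℂ) - Complex.I * ((Real.cos y : ℝ) : ℂ)) / (2 * ((Real.sin y : ℝ) : ℂ))) with hμ
  have hg : HasDerivAt (fun z : ℂ => C * Complex.exp (z * (((Real.sin y : ℝ) : ℂ) - Complex.I * ((Real.cos y : ℝ) : ℂ)) / (2 * ((Real.sin y : ℝ) : ℂ)))) (C * Complex.exp ((s:ℂ) * μ) * μ) (s : ℂ) := by
    simp only [mul_div_assoc, ← hμ]
    have h1 : HasDerivAt (fun z : ℂ => z * μ) μ (s:ℂ) := by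
      simpa using (hasDerivAt_id (s:ℂ)).mul_const μ
    have h2 := (Complex.hasDerivAt_exp ((s:ℂ) * μ)).comp (s:ℂ) h1
    have h3 := h2.const_mul C
    rw [mul_assoc C (Complex.exp ((s:ℂ) * μ)) μ]
    exact h3
  have := hg.comp_ofReal
  rw [radCurve1_eq y hσ β]
  convert this using 1
  simp only [← hμ, mul_div_assoc]
  rfl

lemma radCurve1_abs (y : ℝ) (β : ℂ) (hβ : ‖β‖ = 1) (s : ℝ) :
    ‖radCurve1 y β s‖ = Real.sqrt (Real.exp s * Real.sin y) := by
  unfold radCurve1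
  rw [norm_mul, norm_mul, hβ, Complex.norm_real, Real.norm_eq_abs, Complex.norm_exp]
  have : (-(Complex.I * s / 2) * ((Real.cos y / Real.sin y : ℝ) : ℂ)).re = 0 := by
    simp [Complex.mul_re, Complex.ofReal_re, Complex.ofReal_im, ← Complex.ofReal_div]
  rw [this, Real.exp_zero, _root_.abs_of_nonneg (Real.sqrt_nonneg _)]
  ring

lemma complexAlg (z : ℂ) (E c σ a b : ℝ) (hE : E ≠ 0) (hσ : σ ≠ 0) (ha : a ≠ 0) (hb : b ≠ 0)
    (h1 : c^2 + σ^2 = 1)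
    (hz : (starRingEnd ℂ) z * z = ((E*σ : ℝ):ℂ)) :
    (starRingEnd ℂ) z ^ 2 * ((a:ℝ):ℂ) / (((a*b : ℝ):ℂ) * (((E*c : ℝ):ℂ) + Complex.I * ((E*σ : ℝ):ℂ))^2) *
      (z * ((((σ:ℝ):ℂ) - Complex.I*((c:ℝ):ℂ))/(2*((σ:ℝ):ℂ))))^2 = ((-1/(4*b) : ℝ):ℂ) := by
  have hne : ((c:ℂ) + Complex.I*(σ:ℂ)) ≠ 0 := by
    intro h
    have h2 := congrArg Complex.normSq h
    simp [Complex.normSq_apply] at h2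
    nlinarith
  have hEc : ((E:ℝ):ℂ) ≠ 0 := Complex.ofReal_ne_zero.mpr hE
  have hσc : ((σ:ℝ):ℂ) ≠ 0 := Complex.ofReal_ne_zero.mpr hσ
  have hac : ((a:ℝ):ℂ) ≠ 0 := Complex.ofReal_ne_zero.mpr ha
  have hbc : ((b:ℝ):ℂ) ≠ 0 := Complex.ofReal_ne_zero.mpr hb
  have hsw : (((σ:ℝ):ℂ) - Complex.I*(c:ℂ))^2 = -(((c:ℝ):ℂ) + Complex.I*(σ:ℂ))^2 := by
    linear_combination ((σ:ℂ)^2 + (c:ℂ)^2) * Complex.I_sq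
  have hD : (((E*c : ℝ):ℂ) + Complex.I * ((E*σ : ℝ):ℂ)) = (E:ℂ) * ((c:ℂ) + Complex.I*(σ:ℂ)) := by
    push_cast; ring
  have step1 : (starRingEnd ℂ) z ^ 2 * ((a:ℝ):ℂ) / (((a*b : ℝ):ℂ) * (((E*c : ℝ):ℂ) + Complex.I * ((E*σ : ℝ):ℂ))^2) *
      (z * ((((σ:ℝ):ℂ) - Complex.I*((c:ℝ):ℂ))/(2*((σ:ℝ):ℂ))))^2
      = ((starRingEnd ℂ) z * z)^2 * ((a:ℂ) / (((a*b : ℝ):ℂ) * (((E*c : ℝ):ℂ) + Complex.I * ((E*σ : ℝ):ℂ))^2)) *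
        (((((σ:ℝ):ℂ) - Complex.I*(c:ℂ))^2) / (2*(σ:ℂ))^2) := by
    rw [mul_pow, div_pow]
    ring
  rw [step1, hz, hsw, hD]
  push_cast
  have hne' : (c:ℂ) + (σ:ℂ)*Complex.I ≠ 0 := by rw [mul_comm]; exact hne
  field_simp
  ring

lemma key_eq (y : ℝ) (hy : y ∈ Set.Ioo 0 Real.pi) (β : ℂ) (hβ : ‖β‖ = 1) (s : ℝ) :
    q0 (radCurve1 y β s, radCurve2 y s) * (deriv (radCurve1 y β) s) ^ 2
      = (((-1 / (4 * Real.sin y ^ (4/3 : ℝ)) : ℝ)) : ℂ) := by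
  have hσ : 0 < Real.sin y := Real.sin_pos_of_pos_of_lt_pi hy.1 hy.2
  have hE : 0 < Real.exp s := Real.exp_pos s
  have hd : deriv (radCurve1 y β) s = radCurve1 y β s *
      ((((Real.sin y : ℝ) : ℂ) - Complex.I * ((Real.cos y : ℝ) : ℂ)) / (2 * ((Real.sin y : ℝ) : ℂ))) :=
    (radCurve1_hasDeriv y hσ.ne' β s).deriv
  have habs := radCurve1_abs y β hβ s
  have hEσ : (0:ℝ) ≤ Real.exp s * Real.sin y := by positivity
  have hz : (starRingEnd ℂ) (radCurve1 y β s) * (radCurve1 y β s)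
      = ((Real.exp s * Real.sin y : ℝ) : ℂ) := by
    rw [mul_comm, Complex.mul_conj]
    congr 1
    rw [← Complex.sq_norm, habs, Real.sq_sqrt hEσ]
  have hA : ((Real.exp s * Real.cos y)^2 + Real.sqrt (Real.exp s * Real.sin y) ^ 4) ^ (2/3:ℝ)
      = Real.exp s ^ (4/3:ℝ) := by
    have h4 : Real.sqrt (Real.exp s * Real.sin y) ^ 4 = (Real.exp s * Real.sin y)^2 := by
      rw [show (4:ℕ) = 2*2 from rfl, pow_mul, Real.sq_sqrt hEσ]
    rw [h4, show (Real.exp s * Real.cos y)^2 + (Real.exp s * Real.sin y)^2 = Real.exp s ^ 2 by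
      nlinarith [Real.sin_sq_add_cos_sq y]]
    rw [← Real.rpow_natCast (Real.exp s) 2, ← Real.rpow_mul hE.le]
    norm_num
  have hB : Real.sqrt (Real.exp s * Real.sin y) ^ (8/3:ℝ)
      = Real.exp s ^ (4/3:ℝ) * Real.sin y ^ (4/3:ℝ) := by
    rw [Real.sqrt_eq_rpow, ← Real.rpow_mul hEσ, show (1/2 * (8/3) : ℝ) = 4/3 by norm_num,
      Real.mul_rpow hE.le hσ.le]
  have hC : Real.sqrt (Real.exp s * Real.sin y) ^ 2 = Real.exp s * Real.sin y :=
    Real.sq_sqrt hEσ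
  unfold q0 radCurve2
  simp only
  rw [hd, habs, hA, hB, hC]
  exact complexAlg (radCurve1 y β s) (Real.exp s) (Real.cos y) (Real.sin y)
    (Real.exp s ^ (4/3:ℝ)) (Real.sin y ^ (4/3:ℝ)) hE.ne' hσ.ne'
    (by positivity) (by positivity) (Real.cos_sq_add_sin_sq y) hz

/-- Along the radial curves `δ_{y,β}`, one has
`q₀(δ_{y,β}(s))·(δ'_{y,β,1}(s))² = −1/(4 sin^{4/3} y)`, so each `δ_{y,β}` is a vertical
trajectory of `q₀`, and its `q₀`-length on `(0, 2 ln r)` equals `ln(r)/sin^{2/3}(y)`. -/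
theorem stmt13 (r y : ℝ) (hr : 1 < r) (hy : y ∈ Set.Ioo 0 Real.pi)
    (β : ℂ) (hβ : ‖β‖ = 1) :
    (∀ s ∈ Set.Ioo 0 (2 * Real.log r),
      q0 (radCurve1 y β s, radCurve2 y s) * (deriv (radCurve1 y β) s) ^ 2
        = (((-1 / (4 * Real.sin y ^ (4/3 : ℝ)) : ℝ)) : ℂ)) ∧
    (∫ s in Set.Ioo 0 (2 * Real.log r),
        Real.sqrt ‖q0 (radCurve1 y β s, radCurve2 y s)‖ *
          ‖deriv (radCurve1 y β) s‖)
      = Real.log r / Real.sin y ^ (2/3 : ℝ) := by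
  have hσ : 0 < Real.sin y := Real.sin_pos_of_pos_of_lt_pi hy.1 hy.2
  refine ⟨fun s _ => key_eq y hy β hβ s, ?_⟩
  have hconst : ∀ s : ℝ,
      Real.sqrt (‖q0 (radCurve1 y β s, radCurve2 y s)‖) *
        ‖deriv (radCurve1 y β) s‖ = 1 / (2 * Real.sin y ^ (2/3:ℝ)) := by
    intro s
    have h1 : ‖q0 (radCurve1 y β s, radCurve2 y s) * (deriv (radCurve1 y β) s) ^ 2‖
        = 1 / (4 * Real.sin y ^ (4/3:ℝ)) := by
      rw [key_eq y hy β hβ s, Complex.norm_real, Real.norm_eq_abs, abs_div, abs_neg, abs_one,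
        _root_.abs_of_pos (by positivity)]
    calc Real.sqrt (‖q0 (radCurve1 y β s, radCurve2 y s)‖) *
          ‖deriv (radCurve1 y β) s‖
        = Real.sqrt (‖q0 (radCurve1 y β s, radCurve2 y s)‖ *
            ‖deriv (radCurve1 y β) s‖ ^ 2) := by
          rw [Real.sqrt_mul (norm_nonneg _), Real.sqrt_sq (norm_nonneg _)]
      _ = Real.sqrt (‖q0 (radCurve1 y β s, radCurve2 y s) * (deriv (radCurve1 y β) s) ^ 2‖) := by
          rw [norm_mul, norm_pow]
      _ = Real.sqrt (1 / (4 * Real.sin y ^ (4/3:ℝ))) := by rw [h1]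
      _ = 1 / (2 * Real.sin y ^ (2/3:ℝ)) := by
          rw [show (1:ℝ) / (4 * Real.sin y ^ (4/3:ℝ)) = (1 / (2 * Real.sin y ^ (2/3:ℝ)))^2 by
            rw [div_pow, one_pow, mul_pow, ← Real.rpow_natCast (Real.sin y ^ (2/3:ℝ)) 2,
              ← Real.rpow_mul hσ.le]
            norm_num]
          exact Real.sqrt_sq (by positivity)
  simp only [hconst]
  rw [MeasureTheory.setIntegral_const, measureReal_def, Real.volume_Ioo, smul_eq_mul,
    ENNReal.toReal_ofReal (by nlinarith [Real.log_pos hr] : (0:ℝ) ≤ 2 * Real.log r - 0)]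
  have hb : Real.sin y ^ (2/3:ℝ) ≠ 0 := by positivity
  field_simp
  ring
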